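/- Let n \ge 2 and \ell \in (-1, 0) with \ell < -1/n. Then the largest root t_{1,1}^{0,\ell} = -1/(n\ell) of Q_1^{0,\ell}(t) = (1 + n\ell t)/(1+n\ell) satisfies -1/(n\ell) > 1/n; consequently, for any binary orthogonal array C of strength 2 for which some covering-radius-attaining point y has t_1(y) \ge \ell, one has \rho(C) \ge -1/(n\ell) > 1/n. -/

import Mathlib

noncomputable def rchoose (z : ℝ) (j : ℕ) : ℝ :=
  (∏ t ∈ Finset.range j, (z - t)) / (Nat.factorial j)

/-- Binary Krawtchouk polynomial `K_i^{(n)}(z)`. -/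
noncomputable def Kr (n i : ℕ) (z : ℝ) : ℝ :=
  ∑ j ∈ Finset.range (i + 1), (-1 : ℝ) ^ j * rchoose z j * rchoose ((n : ℝ) - z) (i - j)

/-- Normalized Krawtchouk polynomial `Q_i(t) = K_i^{(n)}(n(1-t)/2)/binom(n,i)`. -/
noncomputable def Qn (n i : ℕ) (t : ℝ) : ℝ :=
  Kr n i ((n : ℝ) * (1 - t) / 2) / (n.choose i : ℝ)

/-- The point `t_m = -1 + 2m/n`. -/
noncomputable def tpt (n m : ℕ) : ℝ := -1 + 2 * (m : ℝ) / (n : ℝ)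

/-- Integral of `f` with respect to the measure `μ_n = 2^{-n} ∑ binom(n,i) δ_{t_i}`. -/
noncomputable def muInt (n : ℕ) (f : ℝ → ℝ) : ℝ :=
  ((2 : ℝ) ^ n)⁻¹ * ∑ i ∈ Finset.range (n + 1), (n.choose i : ℝ) * f (tpt n i)
/-- `C` is a binary orthogonal array of length `n` and strength `τ`: every projection
onto `τ` coordinates takes each value equally often. -/
def IsOA (n τ : ℕ) (C : Finset (Fin n → ZMod 2)) : Prop :=
  ∀ S : Finset (Fin n), S.card = τ → ∀ v : Fin n → ZMod 2,
    (C.filter fun x => ∀ i ∈ S, x i = v i).card * 2 ^ τ = C.card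

/-- `⟨x,y⟩ = 1 - 2 d(x,y)/n`. -/
noncomputable def inn (n : ℕ) (x y : Fin n → ZMod 2) : ℝ :=
  1 - 2 * (hammingDist x y : ℝ) / (n : ℝ)

/-- Covering radius `ρ(C) = min_y max_{x ∈ C} ⟨x,y⟩`. -/
noncomputable def covRad (n : ℕ) (C : Finset (Fin n → ZMod 2)) (hC : C.Nonempty) : ℝ :=
  Finset.univ.inf' Finset.univ_nonempty (fun y => C.sup' hC fun x => inn n x y)

lemma zmod2_ne_iff : ∀ a b : ZMod 2, (a ≠ b ↔ a = b + 1) := by decide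

/-- Pair counting from strength 2. -/
lemma count2 {n : ℕ} (C : Finset (Fin n → ZMod 2)) (hOA : IsOA n 2 C)
    {i j : Fin n} (hij : i ≠ j) (a b : ZMod 2) :
    (C.filter fun x => x i = a ∧ x j = b).card * 4 = C.card := by
  set v : Fin n → ZMod 2 := Function.update (Function.update (fun _ => 0) i a) j b with hv
  have hcard : ({i, j} : Finset (Fin n)).card = 2 := by
    rw [Finset.card_insert_of_notMem (by simpa using hij), Finset.card_singleton]
  have h := hOA {i, j} hcard v
  have hvi : v i = a := by
    rw [hv, Function.update_of_ne hij, Function.update_self]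
  have hvj : v j = b := by rw [hv, Function.update_self]
  have heq : (C.filter fun x => ∀ k ∈ ({i, j} : Finset (Fin n)), x k = v k) =
      C.filter fun x => x i = a ∧ x j = b := by
    apply Finset.filter_congr
    intro x _
    simp [Finset.mem_insert, hvi, hvj]
  rw [heq] at h
  simpa using h

/-- Single-coordinate counting from strength 2 (needs `n ≥ 2`). -/
lemma count1 {n : ℕ} (hn : 2 ≤ n) (C : Finset (Fin n → ZMod 2)) (hOA : IsOA n 2 C)
    (i : Fin n) (a : ZMod 2) :
    (C.filter fun x => x i = a).card * 2 = C.card := by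
  obtain ⟨j, hij⟩ := Fintype.exists_ne_of_one_lt_card (by simp; omega) i
  have h0 := count2 C hOA hij.symm a (0 : ZMod 2)
  have h1 := count2 C hOA hij.symm a (1 : ZMod 2)
  have hsplit := Finset.card_filter_add_card_filter_not
    (s := C.filter fun x => x i = a) (p := fun x => x j = 0)
  rw [Finset.filter_filter, Finset.filter_filter] at hsplit
  have hne : (C.filter fun x => x i = a ∧ ¬ x j = 0) =
      C.filter fun x => x i = a ∧ x j = 1 := by
    apply Finset.filter_congr
    intro x _
    have : ∀ c : ZMod 2, (¬ c = 0 ↔ c = 1) := by decide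
    simp [this]
  rw [hne] at hsplit
  linarith

/-- For `ℓ ∈ (-1, 0)` with `ℓ < -1/n`, the largest root `-1/(nℓ)` of `Q₁^{0,ℓ}`
exceeds `1/n`, and any strength-2 orthogonal array having a covering-radius
attaining point `y` with `t₁(y) ≥ ℓ` has covering radius at least `-1/(nℓ)`. -/
theorem strength2_improved_bound (n : ℕ) (hn : 2 ≤ n) (ℓ : ℝ)
    (hℓ1 : -1 < ℓ) (hℓ0 : ℓ < 0) (hℓn : ℓ < -1 / (n : ℝ)) :
    (1 / (n : ℝ) < -1 / ((n : ℝ) * ℓ)) ∧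
      ∀ C : Finset (Fin n → ZMod 2), ∀ hC : C.Nonempty, IsOA n 2 C →
        (∃ y : Fin n → ZMod 2,
          (C.sup' hC fun x => inn n x y) = covRad n C hC ∧
            ℓ ≤ C.inf' hC fun x => inn n x y) →
        -1 / ((n : ℝ) * ℓ) ≤ covRad n C hC := by
  have hn0 : (0:ℝ) < n := by positivity
  have hn2 : (2:ℝ) ≤ n := by exact_mod_cast hn
  have hnl : (n : ℝ) * ℓ < 0 := mul_neg_of_pos_of_neg hn0 hℓ0
  have hinv : (1/(n:ℝ)) * n = 1 := by field_simp
  constructor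
  · rw [lt_div_iff_of_neg hnl]
    nlinarith
  intro C hC hOA ⟨y, hy1, hy2⟩
  set ρ := covRad n C hC with hρ
  set g : Fin n → (Fin n → ZMod 2) → ℝ :=
    fun i x => if x i ≠ y i then (1:ℝ) else 0 with hg
  have hdist : ∀ x, (hammingDist x y : ℝ) = ∑ i : Fin n, g i x := by
    intro x
    rw [hammingDist]
    push_cast [Finset.card_filter]
    rfl
  have hcnt1 : ∀ i : Fin n, ∑ x ∈ C, g i x = (C.card : ℝ) / 2 := by
    intro i
    have he : ∀ x : Fin n → ZMod 2, g i x = if x i = y i + 1 then (1:ℝ) else 0 := by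
      intro x; simp only [hg, zmod2_ne_iff]
    simp only [he]
    rw [Finset.sum_boole]
    have := count1 hn C hOA i (y i + 1)
    field_simp
    exact_mod_cast this
  have hcnt2 : ∀ i j : Fin n, i ≠ j → ∑ x ∈ C, g i x * g j x = (C.card : ℝ) / 4 := by
    intro i j hij
    have hmul : ∀ x : Fin n → ZMod 2, g i x * g j x =
        if x i = y i + 1 ∧ x j = y j + 1 then (1:ℝ) else 0 := by
      intro x
      simp only [hg, zmod2_ne_iff]
      split_ifs <;> simp_all
    simp only [hmul]
    rw [Finset.sum_boole]
    have := count2 C hOA hij (y i + 1) (y j + 1)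
    field_simp
    exact_mod_cast this
  have hS1 : ∑ x ∈ C, ∑ i : Fin n, g i x = (n : ℝ) * ((C.card : ℝ) / 2) := by
    rw [Finset.sum_comm]
    simp only [hcnt1, Finset.sum_const, Finset.card_univ, Fintype.card_fin, nsmul_eq_mul]
  have hS2 : ∑ x ∈ C, (∑ i : Fin n, g i x) ^ 2 =
      (n : ℝ) * ((C.card : ℝ) / 2 + ((n : ℝ) - 1) * ((C.card : ℝ) / 4)) := by
    have expand : ∀ x : Fin n → ZMod 2, (∑ i : Fin n, g i x) ^ 2 =
        ∑ i : Fin n, ∑ j : Fin n, g i x * g j x := by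
      intro x
      rw [sq, Finset.sum_mul_sum]
    simp only [expand]
    rw [Finset.sum_comm]
    have inner : ∀ i : Fin n, ∑ x ∈ C, ∑ j : Fin n, g i x * g j x =
        (C.card : ℝ) / 2 + ((n : ℝ) - 1) * ((C.card : ℝ) / 4) := by
      intro i
      rw [Finset.sum_comm]
      have step : ∀ j : Fin n, ∑ x ∈ C, g i x * g j x =
          if i = j then (C.card : ℝ) / 2 else (C.card : ℝ) / 4 := by
        intro j
        by_cases h : i = j
        · subst h
          simp only [if_pos rfl]
          have hsq : ∀ x : Fin n → ZMod 2, g i x * g i x = g i x := by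
            intro x; simp only [hg]; split_ifs <;> ring
          simp only [hsq]
          exact hcnt1 i
        · rw [if_neg h]
          exact hcnt2 i j h
      simp only [step]
      have split : ∀ j : Fin n, (if i = j then (C.card : ℝ) / 2 else (C.card : ℝ) / 4) =
          (C.card : ℝ) / 4 + (if i = j then (C.card : ℝ) / 2 - (C.card : ℝ) / 4 else 0) := by
        intro j; split_ifs <;> ring
      simp only [split]
      rw [Finset.sum_add_distrib, Finset.sum_const, Finset.sum_ite_eq]
      simp only [Finset.mem_univ, if_true, Finset.card_univ, Fintype.card_fin, nsmul_eq_mul]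
      ring
    simp only [inner]
    rw [Finset.sum_const]
    simp only [Finset.card_univ, Fintype.card_fin, nsmul_eq_mul]
  -- the quadratic argument
  have hinn : ∀ x : Fin n → ZMod 2, inn n x y = 1 - 2 * (∑ i : Fin n, g i x) / n := by
    intro x; rw [inn, hdist]
  have hle : ∑ x ∈ C, (inn n x y - ℓ) * (inn n x y - ρ) ≤ 0 := by
    apply Finset.sum_nonpos
    intro x hx
    have h1 : ℓ ≤ inn n x y := le_trans hy2 (Finset.inf'_le _ hx)
    have h2 : inn n x y ≤ ρ := by
      rw [← hy1]; exact Finset.le_sup' (fun x => inn n x y) hx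
    nlinarith
  have hval : ∑ x ∈ C, (inn n x y - ℓ) * (inn n x y - ρ)
      = (C.card : ℝ) * (1/(n:ℝ) + ℓ * ρ) := by
    have expand2 : ∀ x : Fin n → ZMod 2, (inn n x y - ℓ) * (inn n x y - ρ) =
        (1-ℓ)*(1-ρ) - (2/(n:ℝ))*((1-ℓ)+(1-ρ)) * (∑ i : Fin n, g i x)
          + (4/(n:ℝ)^2) * (∑ i : Fin n, g i x)^2 := by
      intro x
      rw [hinn x]
      field_simp
      ring
    simp only [expand2]
    rw [Finset.sum_add_distrib, Finset.sum_sub_distrib, Finset.sum_const,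
      ← Finset.mul_sum, ← Finset.mul_sum, hS1, hS2]
    field_simp
    ring
  rw [hval] at hle
  have hN : (0:ℝ) < (C.card : ℝ) := by
    exact_mod_cast Finset.card_pos.mpr hC
  have key : 1/(n:ℝ) + ℓ * ρ ≤ 0 := by nlinarith
  rw [div_le_iff_of_neg hnl]
  nlinarith [mul_le_mul_of_nonneg_right key (le_of_lt hn0)]
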